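/- (Lemma 4.1, part (1), at the true parameter.) In the two-stage model with η(·, θ₀), η'(·, θ₀), η''(·, θ₀) bounded Borel functions on [a,b], define the observed information j_n(θ₀) = (n₁/σ²)η'(x₁, θ₀)² − (n₁/σ²)(ȳ₁ − η(x₁, θ₀))η''(x₁, θ₀) + (n₂/σ²)η'(x₂, θ₀)² − (n₂/σ²)(ȳ₂ − η(x₂, θ₀))η''(x₂, θ₀), where n = n₁ + n₂. Then, as n₂ → ∞ with n₁ held fixed, n^{-1} j_n(θ₀) converges in probability to η'(x₂, θ₀)²/σ². -/

import Mathlib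

open MeasureTheory ProbabilityTheory Filter
open Real
open scoped NNReal ENNReal Topology

lemma aux_integrable_id_gaussian (v : ℝ≥0) (hv : v ≠ 0) :
    Integrable (fun x : ℝ => x) (gaussianReal 0 v) := by
  rw [gaussianReal_of_var_ne_zero 0 hv]
  rw [integrable_withDensity_iff (measurable_gaussianPDF 0 v)
    (ae_of_all _ fun x => ENNReal.ofReal_lt_top)]
  have hv0 : (0:ℝ) < v := by positivity
  have hb : (0:ℝ) < (2*(v:ℝ))⁻¹ := by positivity
  have H := (integrable_mul_exp_neg_mul_sq hb).const_mul ((Real.sqrt (2*π*v))⁻¹)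
  refine H.congr (ae_of_all _ fun x => ?_)
  have e1 : ∀ y : ℝ, (gaussianPDF 0 v y).toReal = gaussianPDFReal 0 v y := fun y =>
    ENNReal.toReal_ofReal (gaussianPDFReal_nonneg 0 v y)
  simp only [e1, gaussianPDFReal]
  rw [show -(2*(v:ℝ))⁻¹ * x^2 = -(x-0)^2/(2*(v:ℝ)) by ring]
  ring

lemma aux_integral_id_gaussian (v : ℝ≥0) (hv : v ≠ 0) :
    ∫ x, x ∂(gaussianReal 0 v) = 0 := by
  rw [gaussianReal_of_var_ne_zero 0 hv]
  have hPDF : gaussianPDF 0 v = fun x => ((gaussianPDFReal 0 v x).toNNReal : ℝ≥0∞) := rfl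
  rw [hPDF, integral_withDensity_eq_integral_smul
    (measurable_gaussianPDFReal 0 v).real_toNNReal (fun x => x)]
  set h : ℝ → ℝ := fun x => (gaussianPDFReal 0 v x).toNNReal • x with hh
  have hmeas : Measurable h :=
    ((measurable_gaussianPDFReal 0 v).max measurable_const).mul measurable_id
  have hodd : ∀ x, h (-x) = - h x := by
    intro x
    simp only [hh, NNReal.smul_def, Real.coe_toNNReal', smul_eq_mul, gaussianPDFReal]
    rw [show (-x - 0)^2 = (x - 0)^2 by ring]
    ring
  have A : Measure.map (fun x : ℝ => -x) (volume : Measure ℝ) = volume :=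
    Measure.map_neg_eq_self _
  have hsm : AEStronglyMeasurable h (Measure.map (fun x : ℝ => -x) (volume : Measure ℝ)) := by
    rw [A]; exact hmeas.aestronglyMeasurable
  have key : ∫ x, h x = ∫ x, h (-x) := by
    conv_lhs => rw [← A]
    exact integral_map measurable_neg.aemeasurable hsm
  have e2 : ∫ x, h (-x) = - ∫ x, h x := by
    simp_rw [hodd]
    exact integral_neg h
  linarith [key, e2]


set_option maxHeartbeats 1000000 in

/-- Lemma 4.1 (1), at the true parameter: as `n₂ → ∞` with `n₁` fixed, the averaged observed
information `n⁻¹ j_n(θ₀)` converges in probability to `η'(x₂, θ₀)²/σ²`. -/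
theorem observed_information_convergence_in_probability
    {Ω : Type*} [mΩ : MeasurableSpace Ω] (μ : Measure Ω) [IsProbabilityMeasure μ]
    (n₁ : ℕ) (hn₁ : 1 ≤ n₁) (a b x₁ θ₀ σ : ℝ) (hab : a ≤ b) (hσ : 0 < σ)
    (η η' η'' : ℝ → ℝ → ℝ)
    (hderiv : ∀ x θ, HasDerivAt (fun t => η x t) (η' x θ) θ)
    (hderiv2 : ∀ x θ, HasDerivAt (fun t => η' x t) (η'' x θ) θ)
    (hη : Measurable fun x => η x θ₀) (hηbdd : ∃ C : ℝ, ∀ x ∈ Set.Icc a b, |η x θ₀| ≤ C)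
    (hη' : Measurable fun x => η' x θ₀) (hη'bdd : ∃ C : ℝ, ∀ x ∈ Set.Icc a b, |η' x θ₀| ≤ C)
    (hη'' : Measurable fun x => η'' x θ₀)
    (hη''bdd : ∃ C : ℝ, ∀ x ∈ Set.Icc a b, |η'' x θ₀| ≤ C)
    (ε : (Fin n₁ ⊕ ℕ) → Ω → ℝ) (hεmeas : ∀ k, Measurable (ε k))
    (hεindep : iIndepFun ε μ)
    (hεlaw : ∀ k, μ.map (ε k) = gaussianReal 0 ⟨σ ^ 2, sq_nonneg σ⟩)
    (ξ : ℝ → ℝ) (hξ : Measurable ξ) (hξab : ∀ y, ξ y ∈ Set.Icc a b)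
    (ybar₁ : Ω → ℝ)
    (hybar₁ : ybar₁ = fun ω => (n₁ : ℝ)⁻¹ * ∑ i : Fin n₁, (η x₁ θ₀ + ε (Sum.inl i) ω))
    (ybar₂ : ℕ → Ω → ℝ)
    (hybar₂ : ybar₂ = fun (n₂ : ℕ) (ω : Ω) =>
      (n₂ : ℝ)⁻¹ * ∑ j ∈ Finset.range n₂, (η (ξ (ybar₁ ω)) θ₀ + ε (Sum.inr j) ω))
    -- the observed information, for second-stage sample size `n₂`
    (J : ℕ → Ω → ℝ)
    (hJ : J = fun (n₂ : ℕ) (ω : Ω) =>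
      ((n₁ : ℝ) / σ ^ 2) * (η' x₁ θ₀) ^ 2
        - ((n₁ : ℝ) / σ ^ 2) * (ybar₁ ω - η x₁ θ₀) * η'' x₁ θ₀
        + ((n₂ : ℝ) / σ ^ 2) * (η' (ξ (ybar₁ ω)) θ₀) ^ 2
        - ((n₂ : ℝ) / σ ^ 2) * (ybar₂ n₂ ω - η (ξ (ybar₁ ω)) θ₀) * η'' (ξ (ybar₁ ω)) θ₀) :
    TendstoInMeasure μ (fun (n₂ : ℕ) (ω : Ω) => ((n₁ + n₂ : ℕ) : ℝ)⁻¹ * J n₂ ω) atTop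
      (fun ω => (η' (ξ (ybar₁ ω)) θ₀) ^ 2 / σ ^ 2) := by
  set v : ℝ≥0 := ⟨σ ^ 2, sq_nonneg σ⟩ with hv_def
  have hσ2 : (σ:ℝ)^2 ≠ 0 := pow_ne_zero 2 hσ.ne'
  have hv : v ≠ 0 := by
    intro h
    have : (v : ℝ) = 0 := by rw [h]; simp
    exact hσ2 this
  -- integrability and centering of the noise
  have hint : ∀ k, Integrable (ε k) μ := fun k => by
    have := (integrable_map_measure aestronglyMeasurable_id (hεmeas k).aemeasurable).mp
      (by rw [hεlaw k]; exact aux_integrable_id_gaussian v hv)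
    simpa [Function.comp] using this
  have hzero : ∀ k, ∫ ω, ε k ω ∂μ = 0 := fun k => by
    have h1 : ∫ x, x ∂(μ.map (ε k)) = ∫ ω, ε k ω ∂μ :=
      integral_map (hεmeas k).aemeasurable measurable_id.aestronglyMeasurable
    rw [← h1, hεlaw k]
    exact aux_integral_id_gaussian v hv
  -- strong law of large numbers for the second-stage noise
  have hslln : ∀ᵐ ω ∂μ, Tendsto
      (fun n : ℕ => (∑ j ∈ Finset.range n, ε (Sum.inr j) ω) / n) atTop (𝓝 0) := by
    have H := strong_law_ae_real (fun j => ε (Sum.inr j)) (hint _)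
      (fun i j hij => hεindep.indepFun (fun h => hij (Sum.inr.inj h)))
      (fun i => ⟨(hεmeas _).aemeasurable, (hεmeas _).aemeasurable, by
        rw [hεlaw, hεlaw]⟩)
    simpa [hzero] using H
  -- measurability
  have hybar₁m : Measurable ybar₁ := by
    rw [hybar₁]
    exact measurable_const.mul
      (Finset.measurable_sum _ fun i _ => measurable_const.add (hεmeas _))
  have hx₂m : Measurable (fun ω => ξ (ybar₁ ω)) := hξ.comp hybar₁m
  have hybar₂m : ∀ n, Measurable (ybar₂ n) := fun n => by
    rw [hybar₂]
    exact measurable_const.mul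
      (Finset.measurable_sum _ fun j _ => (hη.comp hx₂m).add (hεmeas _))
  have hJm : ∀ n, Measurable (J n) := fun n => by
    rw [hJ]
    exact (((measurable_const.sub
      ((measurable_const.mul (hybar₁m.sub measurable_const)).mul measurable_const)).add
      (measurable_const.mul ((hη'.comp hx₂m).pow_const 2))).sub
      ((measurable_const.mul ((hybar₂m n).sub (hη.comp hx₂m))).mul (hη''.comp hx₂m)))
  refine tendstoInMeasure_of_tendsto_ae
    (fun n => (measurable_const.mul (hJm n)).aestronglyMeasurable) ?_
  -- almost-sure convergence
  filter_upwards [hslln] with ω hω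
  set p := η' (ξ (ybar₁ ω)) θ₀
  set q := η'' (ξ (ybar₁ ω)) θ₀
  set e := η (ξ (ybar₁ ω)) θ₀ with he
  set c := ((n₁ : ℝ) / σ ^ 2) * (η' x₁ θ₀) ^ 2
      - ((n₁ : ℝ) / σ ^ 2) * (ybar₁ ω - η x₁ θ₀) * η'' x₁ θ₀ with hc
  set d : ℕ → ℝ := fun n => (∑ j ∈ Finset.range n, ε (Sum.inr j) ω) / n with hd
  have hn₁R : (0:ℝ) < (n₁ : ℝ) := by exact_mod_cast hn₁
  -- basic deterministic limits
  have l1 : Tendsto (fun n : ℕ => ((n₁ : ℝ) + n)⁻¹) atTop (𝓝 0) :=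
    (tendsto_atTop_add_const_left _ _ tendsto_natCast_atTop_atTop).inv_tendsto_atTop
  have l2 : Tendsto (fun n : ℕ => (n : ℝ) * ((n₁ : ℝ) + n)⁻¹) atTop (𝓝 1) := by
    have hne : ∀ n : ℕ, ((n₁ : ℝ) + n) ≠ 0 := fun n => by positivity
    have : Tendsto (fun n : ℕ => 1 - (n₁ : ℝ) * ((n₁ : ℝ) + n)⁻¹) atTop (𝓝 (1 - (n₁:ℝ) * 0)) :=
      tendsto_const_nhds.sub (l1.const_mul _)
    rw [mul_zero, sub_zero] at this
    refine this.congr fun n => ?_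
    field_simp
    ring
  -- combined limit
  have lim : Tendsto (fun n : ℕ =>
      ((n₁ : ℝ) + n)⁻¹ * c + ((n : ℝ) * ((n₁ : ℝ) + n)⁻¹) * (p ^ 2 / σ ^ 2)
        - ((n : ℝ) * ((n₁ : ℝ) + n)⁻¹) * (d n * q / σ ^ 2)) atTop
      (𝓝 (0 * c + 1 * (p ^ 2 / σ ^ 2) - 1 * (0 * q / σ ^ 2))) :=
    ((l1.mul_const c).add (l2.mul_const _)).sub
      (l2.mul ((hω.mul_const q).div_const (σ ^ 2)))
  have lim' : Tendsto (fun n : ℕ =>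
      ((n₁ : ℝ) + n)⁻¹ * c + ((n : ℝ) * ((n₁ : ℝ) + n)⁻¹) * (p ^ 2 / σ ^ 2)
        - ((n : ℝ) * ((n₁ : ℝ) + n)⁻¹) * (d n * q / σ ^ 2)) atTop
      (𝓝 (p ^ 2 / σ ^ 2)) := by
    convert lim using 2
    ring
  refine lim'.congr' ?_
  filter_upwards [eventually_ge_atTop 1] with n hn
  have hnR : (0:ℝ) < (n : ℝ) := by exact_mod_cast hn
  have hd2 : ybar₂ n ω - e = d n := by
    rw [hybar₂, hd]
    simp only [Finset.sum_add_distrib, Finset.sum_const, Finset.card_range, nsmul_eq_mul]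
    rw [← he]
    field_simp
    ring
  rw [hJ]
  simp only [← he, ← hc, hd2]
  have hcast : ((n₁ + n : ℕ) : ℝ) = (n₁ : ℝ) + (n : ℝ) := by push_cast; ring
  rw [hcast]
  have hne : ((n₁ : ℝ) + n) ≠ 0 := by positivity
  field_simp
  ring
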